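/- Let Δ and I be finite nonempty sets, a : I → Sym(Δ) and σ ∈ Sym(I). Let O be the set of orbits of the cyclic group ⟨σ⟩ on I, and for each orbit θ ∈ O fix a representative ι_θ ∈ θ. Then there exists z : I → Sym(Δ) such that w(z,1)⁻¹ ∘ w(a,σ) ∘ w(z,1) = w(b,σ), where b : I → Sym(Δ) satisfies b(i) = 1 for every i ∈ I that is not one of the chosen representatives ι_θ, and for each orbit θ ∈ O, b(ι_θ) = a(ι_θ) ∘ a(σ^{|θ|−1}(ι_θ)) ∘ ⋯ ∘ a(σ²(ι_θ)) ∘ a(σ(ι_θ)) (composition of permutations, the rightmost factor applied first). -/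

import Mathlib

namespace Stmt1

/-- The element `w(a,σ)` of the wreath product `Sym(Δ) ≀ Sym(I)` in its product
action on `Δ^I`: `(w(a,σ)(δ))(i) = a(i)(δ(σ⁻¹(i)))`. -/
def w {Δ I : Type*} (a : I → Equiv.Perm Δ) (σ : Equiv.Perm I) : Equiv.Perm (I → Δ) where
  toFun δ i := a i (δ (σ⁻¹ i))
  invFun δ i := (a (σ i))⁻¹ (δ (σ i))
  left_inv δ := by funext i; simp
  right_inv δ := by funext i; simp

end Stmt1

open Stmt1 in
/-- **Lemma 2.4 (existence of reduced forms)**: given `a : I → Sym(Δ)`, `σ ∈ Sym(I)`,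
and a choice of representatives of the orbits of `⟨σ⟩` on `I` (encoded by a function
`ι` constant on orbits with `ι i` in the orbit of `i`), there is `z : I → Sym(Δ)`
with `w(z,1)⁻¹ ∘ w(a,σ) ∘ w(z,1) = w(b,σ)`, where `b i = 1` away from the
representatives and, at a representative `r` with orbit of size `n`,
`b r = a(r) ∘ a(σ^{n−1}(r)) ∘ ⋯ ∘ a(σ(r))` (rightmost factor applied first). -/
theorem statement1 {Δ I : Type*} [Fintype Δ] [Fintype I] [Nonempty Δ] [Nonempty I]
    (a : I → Equiv.Perm Δ) (σ : Equiv.Perm I) (ι : I → I)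
    (hrep : ∀ i : I, σ.SameCycle i (ι i))
    (hconst : ∀ i j : I, σ.SameCycle i j → ι i = ι j) :
    ∃ z b : I → Equiv.Perm Δ,
      (∀ i : I, i ∉ Set.range ι → b i = 1) ∧
      (∀ r ∈ Set.range ι,
        b r = ((List.range (Nat.card {j : I | σ.SameCycle r j})).map
            (fun k => a ((σ ^ ((Nat.card {j : I | σ.SameCycle r j} - k)
                % Nat.card {j : I | σ.SameCycle r j})) r))).prod) ∧
      (w z 1)⁻¹ * w a σ * w z 1 = w b σ := by
  classical
  -- every point is a natural power of σ applied to its representative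
  have hex : ∀ i : I, ∃ k : ℕ, (σ ^ k) (ι i) = i := by
    intro i
    obtain ⟨m, _, hm⟩ := (hrep i).symm.exists_pow_eq'
    exact ⟨m, hm⟩
  set k : I → ℕ := fun i => Nat.find (hex i) with hkdef
  have hkspec : ∀ i, (σ ^ k i) (ι i) = i := fun i => Nat.find_spec (hex i)
  set z : I → Equiv.Perm Δ := fun i =>
    ((List.range (k i)).map (fun j => a ((σ ^ (k i - j)) (ι i)))).prod with hzdef
  set b : I → Equiv.Perm Δ := fun i => (z i)⁻¹ * a i * z (σ⁻¹ i) with hbdef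
  -- ι is constant along σ⁻¹
  have hισ : ∀ i : I, ι (σ⁻¹ i) = ι i := by
    intro i
    exact hconst (σ⁻¹ i) i ⟨1, by simp⟩
  -- representatives are fixed by ι and have k = 0
  have hιfix : ∀ i : I, ι (ι i) = ι i := fun i => (hconst i (ι i) (hrep i)).symm
  have hkι : ∀ i : I, k (ι i) = 0 := by
    intro i
    rw [hkdef]
    simp only [Nat.find_eq_zero, pow_zero, Equiv.Perm.coe_one, id_eq]
    exact hιfix i
  -- structure of z at a non-representative
  have hzstep : ∀ i : I, k i ≠ 0 → z i = a i * z (σ⁻¹ i) := by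
    intro i hki
    have hk' : k (σ⁻¹ i) = k i - 1 := by
      apply le_antisymm
      · apply Nat.find_le
        rw [hισ i, Equiv.Perm.eq_inv_iff_eq, ← Equiv.Perm.mul_apply, ← pow_succ']
        have h1 : k i - 1 + 1 = k i := by omega
        rw [h1, hkspec i]
      · by_contra h
        push_neg at h
        have hw : (σ ^ (k (σ⁻¹ i) + 1)) (ι i) = i := by
          rw [pow_succ', Equiv.Perm.mul_apply, ← hισ i, hkspec (σ⁻¹ i),
            ← Equiv.Perm.mul_apply, mul_inv_cancel, Equiv.Perm.one_apply]
        have : k i ≤ k (σ⁻¹ i) + 1 := Nat.find_le hw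
        omega
    have hrange : List.range (k i) = 0 :: (List.range (k i - 1)).map Nat.succ := by
      rw [← List.range_succ_eq_map]
      congr 1
      omega
    rw [hzdef]
    simp only
    rw [hrange, List.map_cons, List.prod_cons, Nat.sub_zero, hkspec i, List.map_map]
    congr 1
    rw [hk', hισ i]
    congr 1
    apply List.map_congr_left
    intro j hj
    simp only [List.mem_range] at hj
    simp only [Function.comp_apply]
    congr 3
    omega
  -- z at a representative is 1
  have hzι : ∀ i : I, z (ι i) = 1 := by
    intro i
    rw [hzdef]
    simp [hkι i]
  -- cardinality of the cycle is the minimal period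
  have hcard : ∀ r : I, Nat.card {j : I | σ.SameCycle r j} = Function.minimalPeriod σ r := by
    intro r
    have horb : {j : I | σ.SameCycle r j} = MulAction.orbit (Subgroup.zpowers σ) r := by
      ext j
      constructor
      · rintro ⟨m, hm⟩
        exact ⟨⟨σ ^ m, Subgroup.zpow_mem _ (Subgroup.mem_zpowers σ) m⟩, hm⟩
      · rintro ⟨⟨g, m, rfl⟩, rfl⟩
        exact ⟨m, rfl⟩
    have hs : (σ • ·) = ⇑σ := by funext x; rfl
    rw [horb, Nat.card_eq_fintype_card, ← MulAction.minimalPeriod_eq_card, hs]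
  refine ⟨z, b, ?_, ?_, ?_⟩
  · -- b vanishes away from representatives
    intro i hi
    have hki : k i ≠ 0 := by
      intro h
      apply hi
      have := hkspec i
      rw [h, pow_zero] at this
      exact ⟨i, this⟩
    rw [hbdef]
    simp only
    rw [hzstep i hki]
    group
  · -- value of b at a representative
    rintro r ⟨i, rfl⟩
    set r := ι i with hr
    have hιr : ι r = r := hιfix i
    have hzr : z r = 1 := hzι i
    set n := Function.minimalPeriod σ r with hn
    have hnpos : 0 < n := by
      have : r ∈ Function.periodicPts σ := by
        have : Function.IsPeriodicPt σ (orderOf σ) r := by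
          rw [Function.IsPeriodicPt, Function.IsFixedPt,
            ← Equiv.Perm.coe_pow σ (orderOf σ)]  -- iterate vs pow
          rw [pow_orderOf_eq_one]
          rfl
        exact Function.mk_mem_periodicPts (orderOf_pos σ) this
      exact Function.minimalPeriod_pos_of_mem_periodicPts this
    have hper : (σ ^ n) r = r := by
      have := Function.isPeriodicPt_minimalPeriod σ r
      rwa [Function.IsPeriodicPt, Function.IsFixedPt, ← Equiv.Perm.coe_pow] at this
    -- k (σ⁻¹ r) = n - 1
    have hkinv : k (σ⁻¹ r) = n - 1 := by
      apply le_antisymm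
      · apply Nat.find_le
        rw [hισ r, hιr, Equiv.Perm.eq_inv_iff_eq, ← Equiv.Perm.mul_apply, ← pow_succ']
        have h1 : n - 1 + 1 = n := by omega
        rw [h1, hper]
      · by_contra h
        push_neg at h
        have hw := hkspec (σ⁻¹ r)
        rw [hισ r, hιr] at hw
        have hper' : (σ ^ (k (σ⁻¹ r) + 1)) r = r := by
          rw [pow_succ', Equiv.Perm.mul_apply, hw, ← Equiv.Perm.mul_apply, mul_inv_cancel, Equiv.Perm.one_apply]
        have hlt : k (σ⁻¹ r) + 1 < n := by omega
        have : Function.IsPeriodicPt σ (k (σ⁻¹ r) + 1) r := by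
          rw [Function.IsPeriodicPt, Function.IsFixedPt, ← Equiv.Perm.coe_pow]
          exact hper'
        exact (Function.not_isPeriodicPt_of_pos_of_lt_minimalPeriod (by omega) hlt) this
    rw [hbdef]
    simp only
    rw [hzr, inv_one, one_mul, hcard r, ← hn]
    -- expand the target list
    have hrange : List.range n = 0 :: (List.range (n - 1)).map Nat.succ := by
      rw [← List.range_succ_eq_map]
      congr 1
      omega
    rw [hrange, List.map_cons, List.prod_cons, List.map_map]
    have h0 : (σ ^ ((n - 0) % n)) r = r := by
      simp
    rw [h0]
    congr 1
    rw [hzdef]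
    simp only
    rw [hkinv, hισ r, hιr]
    congr 1
    apply List.map_congr_left
    intro j hj
    simp only [List.mem_range] at hj
    simp only [Function.comp_apply]
    congr 3
    have : n - (j + 1) < n := by omega
    rw [Nat.mod_eq_of_lt this]
    omega
  · -- the conjugation identity
    ext δ i
    simp only [w, Equiv.Perm.mul_apply, Equiv.Perm.inv_def, Equiv.coe_fn_symm_mk, Equiv.coe_fn_mk,
      hbdef, inv_one, Equiv.Perm.one_apply, Equiv.Perm.coe_one, id_eq]
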